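/- There exist a bijection σ: ℕ → ℕ and a vector x ∈ P(T_σ) such that x does not lie in ⋃_{k∈ℕ} {Σ c_n e_n ∈ H : card([n]) ≤ k whenever c_n ≠ 0}; i.e., for every positive integer k there is some n with ⟨x, e_n⟩ ≠ 0 and card([n]) > k. Hence the inclusion ⋃_{k∈ℕ} {Σ c_n e_n ∈ H : card([n]) ≤ k whenever c_n ≠ 0} ⊆ P(T_σ) can be proper. -/

import Mathlib

set_option maxHeartbeats 1000000
open scoped lp

/-- The orbit `[n] = {σ^k n : k ∈ ℤ}` of `n` under the bijection `σ : ℕ → ℕ`. -/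
def permOrbit (σ : Equiv.Perm ℕ) (n : ℕ) : Set ℕ := {m : ℕ | ∃ z : ℤ, (σ ^ z) n = m}

section aux

/-- The index type: block `j` has `j+1` elements. -/
abbrev BlockIdx : Type := Σ j : ℕ, Fin (j + 1)

instance : Infinite BlockIdx :=
  Infinite.of_injective (fun j => (⟨j, 0⟩ : BlockIdx)) (by
    intro a b h; exact congrArg Sigma.fst h)

noncomputable instance : Denumerable BlockIdx :=
  Denumerable.ofEncodableOfInfinite _

/-- Composition with a permutation preserves membership in `ℓ²`. -/
lemma memℓp_comp_perm {f : ℕ → ℂ} (τ : Equiv.Perm ℕ) (hf : Memℓp f 2) :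
    Memℓp (fun n => f (τ n)) 2 := by
  have hp : (0:ℝ) < (2 : ENNReal).toReal := by norm_num
  apply memℓp_gen
  have := (memℓp_gen_iff hp).1 hf
  exact (Equiv.summable_iff τ).2 this

/-- Permutation of coordinates as a linear isometry equivalence of `ℓ²(ℕ, ℂ)`. -/
noncomputable def lpPerm (τ : Equiv.Perm ℕ) : ℓ²(ℕ, ℂ) ≃ₗᵢ[ℂ] ℓ²(ℕ, ℂ) where
  toLinearEquiv :=
    { toFun := fun f => ⟨fun n => f (τ.symm n), memℓp_comp_perm τ.symm (lp.memℓp f)⟩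
      invFun := fun f => ⟨fun n => f (τ n), memℓp_comp_perm τ (lp.memℓp f)⟩
      map_add' := by intro f g; ext n; simp [lp.coeFn_add]; rfl
      map_smul' := by intro c f; ext n; simp [lp.coeFn_smul]
      left_inv := by intro f; ext n; simp
      right_inv := by intro f; ext n; simp }
  norm_map' := by
    intro f
    have hp : (0:ℝ) < (2 : ENNReal).toReal := by norm_num
    rw [lp.norm_eq_tsum_rpow hp, lp.norm_eq_tsum_rpow hp]
    congr 1
    exact Equiv.tsum_eq τ.symm (fun n => ‖f n‖ ^ (2 : ENNReal).toReal)

@[simp] lemma lpPerm_apply (τ : Equiv.Perm ℕ) (f : ℓ²(ℕ, ℂ)) (n : ℕ) :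
    (lpPerm τ f : ∀ _ : ℕ, ℂ) n = f (τ.symm n) := rfl

/-- Conjugation of permutations by an equivalence, as a monoid hom. -/
def permCongrHom {α β : Type*} (g : α ≃ β) : Equiv.Perm α →* Equiv.Perm β where
  toFun := g.permCongr
  map_one' := by ext b; simp [Equiv.permCongr_def]
  map_mul' p q := by ext b; simp [Equiv.permCongr_def]

lemma Equiv.zpow_addLeft {α : Type*} [AddCommGroup α] (a : α) (n : ℤ) :
    Equiv.addLeft a ^ n = Equiv.addLeft (n • a) := by
  induction n using Int.induction_on with
  | zero => ext x; simp
  | succ n ih =>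
    rw [zpow_add_one, ih]; ext x
    simp only [Equiv.Perm.mul_apply, Equiv.coe_addLeft, add_zsmul, one_zsmul]; abel
  | pred n ih =>
    rw [zpow_sub_one, ih]; ext x
    simp only [Equiv.Perm.mul_apply, Equiv.coe_addLeft, Equiv.Perm.inv_def, sub_zsmul, one_zsmul,
      Equiv.addLeft_symm_apply]; abel

end aux

/-- There exist a bijection `σ : ℕ → ℕ`, an associated permutation operator `T`, and a
periodic point `x` of `T` such that for every positive integer `k` there is some `n` with
`⟨x, e_n⟩ ≠ 0` and `card [n] > k`; hence the inclusion of Theorem 4.1 can be proper. -/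
theorem permutation_periodic_points_inclusion_can_be_proper
    {H : Type*} [NormedAddCommGroup H] [InnerProductSpace ℂ H] [CompleteSpace H]
    (e : HilbertBasis ℕ ℂ H) :
    ∃ (σ : Equiv.Perm ℕ) (T : H →L[ℂ] H) (x : H),
      (∀ n, T (e n) = e (σ n)) ∧
      (∃ m : ℕ, 0 < m ∧ (T ^ m) x = x) ∧
      ∀ k : ℕ, 0 < k → ∃ n, e.repr x n ≠ 0 ∧
        (permOrbit σ n).Finite ∧ k < (permOrbit σ n).ncard := by
  classical
  -- the bijection between `ℕ` and the blocks
  obtain ⟨g⟩ : Nonempty (BlockIdx ≃ ℕ) := ⟨Denumerable.eqv BlockIdx⟩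
  -- the cyclic permutation of each block
  set p : Equiv.Perm BlockIdx :=
    Equiv.Perm.sigmaCongrRightHom _ (fun j => Equiv.addLeft (1 : Fin (j + 1))) with hp
  set σ : Equiv.Perm ℕ := permCongrHom g p with hσ
  -- zpow of σ
  have hσz : ∀ (z : ℤ) (n : ℕ), (σ ^ z) n = g ((p ^ z) (g.symm n)) := by
    intro z n
    have : σ ^ z = permCongrHom g (p ^ z) := (map_zpow (permCongrHom g) p z).symm
    rw [this]
    rfl
  -- zpow of p
  have hpz : ∀ (z : ℤ) (s : BlockIdx),
      (p ^ z) s = ⟨s.1, (z • 1 : Fin (s.1 + 1)) + s.2⟩ := by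
    intro z s
    have : p ^ z = Equiv.Perm.sigmaCongrRightHom _
        ((fun j => Equiv.addLeft (1 : Fin (j + 1))) ^ z) :=
      (map_zpow (Equiv.Perm.sigmaCongrRightHom _) _ z).symm
    rw [this]
    show Equiv.sigmaCongrRight _ s = _
    cases s with
    | mk j i =>
      simp only [Equiv.sigmaCongrRight_apply]
      congr 1
      have : ((fun j => Equiv.addLeft (1 : Fin (j + 1))) ^ z) j
          = Equiv.addLeft (1 : Fin (j + 1)) ^ z := rfl
      rw [this, Equiv.zpow_addLeft]
      rfl
  -- the orbit of `n` is the image under `g` of the block containing it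
  have horbit0 : ∀ s : BlockIdx, permOrbit σ (g s) = g '' (Set.range (Sigma.mk s.1)) := by
    rintro ⟨j, i0⟩
    ext m
    constructor
    · rintro ⟨z, rfl⟩
      rw [hσz, Equiv.symm_apply_apply, hpz]
      exact ⟨⟨j, z • 1 + i0⟩, ⟨z • 1 + i0, rfl⟩, rfl⟩
    · rintro ⟨s, ⟨i, rfl⟩, rfl⟩
      refine ⟨((i : ℤ) - (i0 : ℤ)), ?_⟩
      rw [hσz, Equiv.symm_apply_apply, hpz]
      congr 1
      show (⟨j, ((i : ℤ) - (i0 : ℤ)) • 1 + i0⟩ : BlockIdx) = ⟨j, i⟩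
      congr 1
      open Fin.CommRing in
      (rw [show ∀ z : ℤ, z • (1 : Fin (j + 1)) = (z : Fin (j + 1)) from fun z => zsmul_one z,
        Int.cast_sub]
       push_cast
       simp [Fin.cast_val_eq_self])
  have horbit : ∀ n : ℕ, permOrbit σ n = g '' (Set.range (Sigma.mk (g.symm n).1)) := by
    intro n
    conv_lhs => rw [← Equiv.apply_symm_apply g n]
    exact horbit0 (g.symm n)
  have horbit_fin : ∀ n : ℕ, (permOrbit σ n).Finite := by
    intro n
    rw [horbit]
    exact ((Set.finite_range _)).image _
  have horbit_card : ∀ n : ℕ, (permOrbit σ n).ncard = (g.symm n).1 + 1 := by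
    intro n
    rw [horbit, Set.ncard_image_of_injective _ g.injective, ← Set.image_univ,
      Set.ncard_image_of_injective _ sigma_mk_injective]
    simp [Set.ncard_univ, Nat.card_eq_fintype_card]
  -- the coefficients
  set w : ℕ → ℝ := fun j => (1 / 2 : ℝ) ^ j / (j + 1) with hw
  have hwpos : ∀ j, 0 < w j := fun j => by positivity
  set c : ℕ → ℂ := fun n => ((w (g.symm n).1 : ℝ) : ℂ) with hc
  -- σ-invariance of c
  have hcinv : ∀ n, c (σ.symm n) = c n := by
    intro n
    have : (g.symm (σ.symm n)).1 = (g.symm n).1 := by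
      have h1 : σ.symm n = g (p.symm (g.symm n)) := rfl
      rw [h1, Equiv.symm_apply_apply]
      cases hsn : g.symm n with
      | mk j i => rfl
    simp [hc, this]
  -- c is in ℓ²
  have hp2 : (0:ℝ) < (2 : ENNReal).toReal := by norm_num
  have hcmem : Memℓp c 2 := by
    apply memℓp_gen
    have key : Summable (fun s : BlockIdx => ‖c (g s)‖ ^ (2 : ENNReal).toReal) := by
      have h2 : (2 : ENNReal).toReal = ((2 : ℕ) : ℝ) := by norm_num
      have heq : (fun s : BlockIdx => ‖c (g s)‖ ^ (2 : ENNReal).toReal)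
          = fun s : BlockIdx => (w s.1) ^ (2 : ℕ) := by
        funext s
        rw [h2, Real.rpow_natCast]
        simp only [hc, Equiv.symm_apply_apply, Complex.norm_real, Real.norm_eq_abs]
        rw [abs_of_pos (hwpos _)]
      rw [heq]
      apply summable_sigma_of_nonneg (fun s => by positivity) |>.2
      constructor
      · intro j; exact Summable.of_finite
      · have hts : (fun j : ℕ => ∑' i : Fin (j + 1), (w (⟨j, i⟩ : BlockIdx).1) ^ (2:ℕ))
            = fun j : ℕ => ((j:ℝ)+1) * (w j)^(2:ℕ) := by
          funext j
          rw [tsum_fintype]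
          simp [Finset.sum_const, Finset.card_univ, mul_comm]
        rw [hts]
        apply Summable.of_nonneg_of_le (fun j => by positivity)
          (f := fun j => (1/4 : ℝ) ^ j)
        · intro j
          have h14 : ((1/4:ℝ))^j = ((1/2:ℝ)^j)^2 := by
            rw [← pow_mul, mul_comm]
            rw [pow_mul]
            norm_num
          have hj1 : (0:ℝ) < (j:ℝ) + 1 := by positivity
          calc ((j:ℝ)+1) * (w j)^(2:ℕ)
              = ((1/2:ℝ)^j)^2 / ((j:ℝ)+1) := by
                simp only [hw]
                field_simp
            _ ≤ ((1/2:ℝ)^j)^2 := by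
                rw [div_le_iff₀ hj1]
                nlinarith [pow_pos (by norm_num : (0:ℝ) < 1/2) j, hj1]
            _ = (1/4:ℝ)^j := h14.symm
        · exact summable_geometric_of_lt_one (by norm_num) (by norm_num)
    exact (Equiv.summable_iff g).1 key
  set y : ℓ²(ℕ, ℂ) := ⟨c, hcmem⟩ with hy
  set x : H := e.repr.symm y with hx
  -- the operator
  set Tiso : H ≃ₗᵢ[ℂ] H := (e.repr.trans (lpPerm σ)).trans e.repr.symm with hT
  set T : H →L[ℂ] H := Tiso.toLinearIsometry.toContinuousLinearMap with hTc
  have hTapp : ∀ v : H, T v = e.repr.symm (lpPerm σ (e.repr v)) := fun v => rfl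
  refine ⟨σ, T, x, ?_, ⟨1, one_pos, ?_⟩, ?_⟩
  · -- T (e n) = e (σ n)
    intro n
    rw [hTapp, e.repr_self]
    have : lpPerm σ (lp.single 2 n (1:ℂ)) = lp.single 2 (σ n) (1:ℂ) := by
      ext m
      rw [lpPerm_apply]
      rw [lp.single_apply, lp.single_apply]
      by_cases h : m = σ n
      · subst h
        rw [Equiv.symm_apply_apply]
        simp [eq_rec_constant]
      · rw [Pi.single_apply, Pi.single_apply, if_neg, if_neg h]
        intro hcon
        exact h (by rw [← hcon, Equiv.apply_symm_apply])
    rw [this, ← HilbertBasis.repr_self e (σ n), LinearIsometryEquiv.symm_apply_apply]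
  · -- periodicity: T x = x
    rw [pow_one, hTapp, hx, LinearIsometryEquiv.apply_symm_apply]
    congr 1
    ext n
    rw [lpPerm_apply]
    exact hcinv n
  · -- large orbits with nonzero coefficients
    intro k hk
    refine ⟨g ⟨k, 0⟩, ?_, horbit_fin _, ?_⟩
    · rw [hx, LinearIsometryEquiv.apply_symm_apply]
      show c (g ⟨k, 0⟩) ≠ 0
      simp only [hc, Equiv.symm_apply_apply]
      exact_mod_cast (hwpos k).ne'
    · rw [horbit_card, Equiv.symm_apply_apply]
      exact Nat.lt_succ_self k
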